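/- Let u be C² on an open set Ω ⊆ ℝⁿ with D²u ≥ −tan(θ)·I, θ ∈ (0, π/2), and let φ ∈ (0, π/2 − θ), s = sin φ, c = cos φ. Suppose additionally arctan of each eigenvalue of D²u(x) is < π/2 (i.e. D²u(x) finite) and define, at each x, the matrix M̄(x) = (−sI + c·D²u(x))(cI + s·D²u(x))⁻¹. Then cI + s·D²u(x) is invertible, M̄(x) is symmetric, and the eigenvalues μ̄ᵢ of M̄(x) satisfy arctan(μ̄ᵢ) = arctan(λᵢ) − φ, where λᵢ are the eigenvalues of D²u(x). In particular −tan(θ+φ)·I ≤ M̄(x) ≤ tan(π/2 − φ)·I fails on the upper side only in the limit, and one has M̄(x) < cot(φ)·I and M̄(x) ≥ −tan(θ+φ)·I. -/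

import Mathlib

open Real

open Real Matrix Polynomial Finset

-- real lemma
lemma keyReal (θ φ x : ℝ) (hθ1 : 0 < θ) (hφ1 : 0 < φ) (hθφ : θ + φ < π / 2)
    (hx : -Real.tan θ ≤ x) :
    0 < Real.cos φ + Real.sin φ * x ∧
    Real.arctan ((-Real.sin φ + Real.cos φ * x) * (Real.cos φ + Real.sin φ * x)⁻¹)
      = Real.arctan x - φ ∧ -θ ≤ Real.arctan x := by
  have hπ := Real.pi_pos
  have hφ2 : φ < π / 2 := by linarith
  have hθ2 : θ < π / 2 := by linarith
  set a := Real.arctan x with ha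
  have ha1 : -θ ≤ a := by
    have : Real.arctan (-Real.tan θ) ≤ a := Real.arctan_strictMono.monotone hx
    rwa [Real.arctan_neg, Real.arctan_tan (by linarith) hθ2] at this
  have ha2 : a < π / 2 := Real.arctan_lt_pi_div_two x
  have haφ1 : -(π / 2) < a - φ := by linarith
  have haφ2 : a - φ < π / 2 := by linarith
  have hcosa : 0 < Real.cos a := Real.cos_arctan_pos x
  have hcosaφ : 0 < Real.cos (a - φ) := Real.cos_pos_of_mem_Ioo ⟨haφ1, haφ2⟩
  have hx_eq : x = Real.sin a / Real.cos a := by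
    rw [← Real.tan_eq_sin_div_cos, ha, Real.tan_arctan]
  have h1 : Real.cos φ + Real.sin φ * x = Real.cos (a - φ) / Real.cos a := by
    rw [hx_eq, Real.cos_sub]; field_simp
  have hpos : 0 < Real.cos φ + Real.sin φ * x := by
    rw [h1]; exact div_pos hcosaφ hcosa
  refine ⟨hpos, ?_, ha1⟩
  have h2 : -Real.sin φ + Real.cos φ * x = Real.sin (a - φ) / Real.cos a := by
    rw [hx_eq, Real.sin_sub]; field_simp; ring
  have h3 : (-Real.sin φ + Real.cos φ * x) * (Real.cos φ + Real.sin φ * x)⁻¹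
      = Real.tan (a - φ) := by
    rw [h1, h2, Real.tan_eq_sin_div_cos]
    field_simp
  exact by rw [h3, Real.arctan_tan haφ1 haφ2]

-- permutation from multiset equality
lemma existsPerm {n : ℕ} (f g : Fin n → ℝ)
    (h : Multiset.map f Finset.univ.val = Multiset.map g Finset.univ.val) :
    ∃ σ : Equiv.Perm (Fin n), ∀ i, f (σ i) = g i := by
  have hf := Tuple.monotone_sort f
  have hg := Tuple.monotone_sort g
  have hmid : List.Perm (List.ofFn f) (List.ofFn g) := by
    rw [Fin.univ_val_map, Fin.univ_val_map] at h
    exact Multiset.coe_eq_coe.mp h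
  have hp : List.Perm (List.ofFn (f ∘ Tuple.sort f)) (List.ofFn (g ∘ Tuple.sort g)) :=
    ((Tuple.sort f).ofFn_comp_perm f).trans (hmid.trans ((Tuple.sort g).ofFn_comp_perm g).symm)
  have heq : f ∘ Tuple.sort f = g ∘ Tuple.sort g :=
    List.ofFn_injective (hp.eq_of_sortedLE hf.sortedLE_ofFn hg.sortedLE_ofFn)
  refine ⟨(Tuple.sort g).symm.trans (Tuple.sort f), fun i => ?_⟩
  have := congrFun heq ((Tuple.sort g).symm i)
  simpa using this

-- charpoly conj invariance
lemma charpolyConj {n : ℕ} (U B : Matrix (Fin n) (Fin n) ℝ)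
    (h1 : U * Uᴴ = 1) (h2 : Uᴴ * U = 1) :
    (U * B * Uᴴ).charpoly = B.charpoly := by
  have hmat : charmatrix (U * B * Uᴴ) =
      U.map C * charmatrix B * Uᴴ.map C := by
    unfold charmatrix
    have hsc : (Matrix.scalar (Fin n) (X : ℝ[X])) = (X : ℝ[X]) • (1 : Matrix (Fin n) (Fin n) ℝ[X]) := by
      simp [Matrix.scalar, Matrix.smul_one_eq_diagonal]
    rw [mul_sub, sub_mul, hsc]
    congr 1
    · symm
      rw [mul_smul_comm, smul_mul_assoc, mul_one, ← Matrix.map_mul, h1]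
      simp
    · simp only [RingHom.mapMatrix_apply]
      rw [← Matrix.map_mul, ← Matrix.map_mul]
  rw [Matrix.charpoly, Matrix.charpoly, hmat, Matrix.det_mul, Matrix.det_mul]
  have : U.map C * Uᴴ.map C = 1 := by rw [← Matrix.map_mul, h1]; simp
  have hdet : (U.map C).det * (Uᴴ.map C).det = 1 := by
    rw [← Matrix.det_mul, this, Matrix.det_one]
  calc (U.map C).det * (charmatrix B).det * (Uᴴ.map C).det
      = (charmatrix B).det * ((U.map C).det * (Uᴴ.map C).det) := by ring
    _ = (charmatrix B).det := by rw [hdet, mul_one]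

lemma charpolyDiagonal {n : ℕ} (d : Fin n → ℝ) :
    (Matrix.diagonal d).charpoly = ∏ i, (X - C (d i)) := by
  rw [Matrix.charpoly_of_upperTriangular _ (Matrix.blockTriangular_diagonal d)]
  simp

lemma hermCharpoly {n : ℕ} (M : Matrix (Fin n) (Fin n) ℝ) (hM : M.IsHermitian) :
    M.charpoly = ∏ i, (X - C (hM.eigenvalues i)) := by
  have hU1 : (hM.eigenvectorUnitary : Matrix (Fin n) (Fin n) ℝ) *
      (hM.eigenvectorUnitary : Matrix (Fin n) (Fin n) ℝ)ᴴ = 1 := by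
    rw [← Matrix.star_eq_conjTranspose]
    exact Unitary.coe_mul_star_self _
  have hU2 : (hM.eigenvectorUnitary : Matrix (Fin n) (Fin n) ℝ)ᴴ *
      (hM.eigenvectorUnitary : Matrix (Fin n) (Fin n) ℝ) = 1 := by
    rw [← Matrix.star_eq_conjTranspose]
    exact Unitary.coe_star_mul_self _
  conv_lhs => rw [hM.spectral_theorem]
  rw [Unitary.conjStarAlgAut_apply, Matrix.star_eq_conjTranspose, charpolyConj _ _ hU1 hU2]
  rw [show (RCLike.ofReal ∘ hM.eigenvalues : Fin n → ℝ) = hM.eigenvalues by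
    simp [RCLike.ofReal_real_eq_id]]
  exact charpolyDiagonal _

lemma posDefConj {n : ℕ} {U D : Matrix (Fin n) (Fin n) ℝ} (hD : D.PosDef)
    (h1 : U * Uᴴ = 1) (h2 : Uᴴ * U = 1) : (U * D * Uᴴ).PosDef := by
  refine Matrix.PosDef.of_dotProduct_mulVec_pos (Matrix.isHermitian_mul_mul_conjTranspose U hD.1) fun x hx => ?_
  have hx' : Uᴴ *ᵥ x ≠ 0 := by
    intro hc
    apply hx
    have h3 : U *ᵥ (Uᴴ *ᵥ x) = U *ᵥ (0 : Fin n → ℝ) := congrArg _ hc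
    rwa [Matrix.mulVec_mulVec, h1, Matrix.one_mulVec, Matrix.mulVec_zero] at h3
  have := hD.dotProduct_mulVec_pos hx'
  simpa only [star_mulVec, Matrix.dotProduct_mulVec, Matrix.vecMul_vecMul,
    Matrix.conjTranspose_conjTranspose, Matrix.mul_assoc] using this

lemma comboDiag {n : ℕ} {U : Matrix (Fin n) (Fin n) ℝ} (hU1 : U * Uᴴ = 1) (d : Fin n → ℝ)
    (α β : ℝ) :
    α • (1 : Matrix (Fin n) (Fin n) ℝ) + β • (U * Matrix.diagonal d * Uᴴ) =
      U * Matrix.diagonal (fun i => α + β * d i) * Uᴴ := by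
  have hd : Matrix.diagonal (fun i => α + β * d i)
      = α • (1 : Matrix (Fin n) (Fin n) ℝ) + β • Matrix.diagonal d := by
    rw [Matrix.smul_one_eq_diagonal, ← Matrix.diagonal_smul, ← Matrix.diagonal_add]
    rfl
  rw [hd]
  simp only [Matrix.mul_add, Matrix.add_mul, Matrix.mul_smul, Matrix.smul_mul, Matrix.mul_one]
  rw [hU1]

lemma eigLB {n : ℕ} {A : Matrix (Fin n) (Fin n) ℝ} (hA : A.IsHermitian) {t : ℝ}
    (hlb : (A + t • (1 : Matrix (Fin n) (Fin n) ℝ)).PosSemidef) (i : Fin n) :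
    -t ≤ hA.eigenvalues i := by
  set v : Fin n → ℝ := ⇑(hA.eigenvectorBasis i) with hv
  have hvv : dotProduct (star v) v = 1 := by
    have hnorm := hA.eigenvectorBasis.orthonormal.1 i
    rw [EuclideanSpace.norm_eq] at hnorm
    have hsum : ∑ j, ‖hA.eigenvectorBasis i j‖ ^ 2 = 1 := by
      have := congrArg (fun x => x ^ 2) hnorm
      simpa [Real.sq_sqrt (Finset.sum_nonneg fun j _ => sq_nonneg _)] using this
    calc dotProduct (star v) v = ∑ j, ‖hA.eigenvectorBasis i j‖ ^ 2 := by
          simp [dotProduct, hv, Real.norm_eq_abs, sq_abs, sq]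
      _ = 1 := hsum
  have h := hlb.dotProduct_mulVec_nonneg v
  have hmv : (A + t • (1 : Matrix (Fin n) (Fin n) ℝ)) *ᵥ v = (hA.eigenvalues i + t) • v := by
    rw [Matrix.add_mulVec, Matrix.smul_mulVec, Matrix.one_mulVec]
    rw [hv, hA.mulVec_eigenvectorBasis]
    ext j
    simp [add_smul]
    ring
  rw [hmv, dotProduct_smul, hvv] at h
  simp only [smul_eq_mul, mul_one] at h
  linarith


/-- Hessian transformation rule under the downward Lewy–Yuan rotation by angle
`φ`: if `A` (a Hessian) is symmetric with `A ≥ -tan(θ)·I`, `θ + φ < π/2`,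
`s = sin φ`, `c = cos φ`, then `cI + sA` is invertible, the rotated Hessian
`M̄ = (-sI + cA)(cI + sA)⁻¹` is symmetric, its eigenvalues `μ̄ᵢ` satisfy
`arctan μ̄ᵢ = arctan λᵢ - φ`, and `-tan(θ+φ)·I ≤ M̄ < cot(φ)·I`
(with `cot φ = tan(π/2 - φ)`). -/
theorem stmt19 {n : ℕ} (θ φ : ℝ)
    (hθ : θ ∈ Set.Ioo 0 (π / 2)) (hφ : φ ∈ Set.Ioo 0 (π / 2 - θ))
    (A : Matrix (Fin n) (Fin n) ℝ) (hA : A.IsHermitian)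
    (hlb : (A + Real.tan θ • (1 : Matrix (Fin n) (Fin n) ℝ)).PosSemidef)
    (s c : ℝ) (hs : s = Real.sin φ) (hc : c = Real.cos φ)
    (Mbar : Matrix (Fin n) (Fin n) ℝ)
    (hMdef : Mbar = (-(s • (1 : Matrix (Fin n) (Fin n) ℝ)) + c • A) *
      (c • (1 : Matrix (Fin n) (Fin n) ℝ) + s • A)⁻¹) :
    IsUnit (c • (1 : Matrix (Fin n) (Fin n) ℝ) + s • A) ∧
    ∃ hM : Mbar.IsHermitian,
      (∃ σ : Equiv.Perm (Fin n), ∀ i,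
        Real.arctan (hM.eigenvalues (σ i)) = Real.arctan (hA.eigenvalues i) - φ) ∧
      ((Real.tan (π / 2 - φ)) • (1 : Matrix (Fin n) (Fin n) ℝ) - Mbar).PosDef ∧
      (Mbar + Real.tan (θ + φ) • (1 : Matrix (Fin n) (Fin n) ℝ)).PosSemidef := by
  obtain ⟨hθ1, hθ2⟩ := hθ
  obtain ⟨hφ1, hφ2⟩ := hφ
  have hθφ : θ + φ < π / 2 := by linarith
  subst hs hc
  set ev : Fin n → ℝ := hA.eigenvalues with hev
  have hlam : ∀ i, -Real.tan θ ≤ ev i := fun i => eigLB hA hlb i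
  have hkey := fun i => keyReal θ φ (ev i) hθ1 hφ1 hθφ (hlam i)
  set U : Matrix (Fin n) (Fin n) ℝ := (hA.eigenvectorUnitary : Matrix (Fin n) (Fin n) ℝ)
    with hUdef
  have hU1 : U * Uᴴ = 1 := by
    rw [hUdef, ← Matrix.star_eq_conjTranspose]; exact Unitary.coe_mul_star_self _
  have hU2 : Uᴴ * U = 1 := by
    rw [hUdef, ← Matrix.star_eq_conjTranspose]; exact Unitary.coe_star_mul_self _
  have hAspec : A = U * Matrix.diagonal ev * Uᴴ := by
    conv_lhs => rw [hA.spectral_theorem]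
    rw [Unitary.conjStarAlgAut_apply, Matrix.star_eq_conjTranspose,
      show ((RCLike.ofReal ∘ ev : Fin n → ℝ)) = ev by simp [RCLike.ofReal_real_eq_id]]
  have hconj : ∀ B B' : Matrix (Fin n) (Fin n) ℝ,
      (U * B * Uᴴ) * (U * B' * Uᴴ) = U * (B * B') * Uᴴ := by
    intro B B'
    simp only [Matrix.mul_assoc]
    rw [← Matrix.mul_assoc Uᴴ U, hU2, Matrix.one_mul]
  set ν : Fin n → ℝ := fun i =>
    (-Real.sin φ + Real.cos φ * ev i) * (Real.cos φ + Real.sin φ * ev i)⁻¹ with hν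
  have hP : Real.cos φ • (1 : Matrix (Fin n) (Fin n) ℝ) + Real.sin φ • A
      = U * Matrix.diagonal (fun i => Real.cos φ + Real.sin φ * ev i) * Uᴴ := by
    conv_lhs => rw [hAspec]
    exact comboDiag hU1 ev _ _
  have hQ : -(Real.sin φ • (1 : Matrix (Fin n) (Fin n) ℝ)) + Real.cos φ • A
      = U * Matrix.diagonal (fun i => -Real.sin φ + Real.cos φ * ev i) * Uᴴ := by
    conv_lhs => rw [hAspec, ← neg_smul]
    exact comboDiag hU1 ev _ _
  have hPinv : (Real.cos φ • (1 : Matrix (Fin n) (Fin n) ℝ) + Real.sin φ • A)⁻¹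
      = U * Matrix.diagonal (fun i => (Real.cos φ + Real.sin φ * ev i)⁻¹) * Uᴴ := by
    apply Matrix.inv_eq_right_inv
    rw [hP, hconj, Matrix.diagonal_mul_diagonal]
    have : (fun i => (Real.cos φ + Real.sin φ * ev i) * (Real.cos φ + Real.sin φ * ev i)⁻¹)
        = fun _ : Fin n => (1 : ℝ) := by
      funext i
      exact mul_inv_cancel₀ (hkey i).1.ne'
    rw [this, Matrix.diagonal_one, Matrix.mul_one, hU1]
  have hMd : Mbar = U * Matrix.diagonal ν * Uᴴ := by
    rw [hMdef, hQ, hPinv, hconj, Matrix.diagonal_mul_diagonal]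
  have hνtan : ∀ i, ν i = Real.tan (Real.arctan (ev i) - φ) := by
    intro i
    rw [← (hkey i).2.1, Real.tan_arctan]
  constructor
  · have hpd : (Real.cos φ • (1 : Matrix (Fin n) (Fin n) ℝ) + Real.sin φ • A).PosDef := by
      rw [hP]
      exact posDefConj (Matrix.PosDef.diagonal fun i => (hkey i).1) hU1 hU2
    exact hpd.isUnit
  · have hM : Mbar.IsHermitian := by
      rw [hMd]
      exact Matrix.isHermitian_mul_mul_conjTranspose U (Matrix.isHermitian_diagonal ν)
    refine ⟨hM, ?_, ?_, ?_⟩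
    · -- eigenvalue permutation
      have hchar : (∏ i, (X - C (hM.eigenvalues i))) = ∏ i, (X - C (ν i)) := by
        rw [← hermCharpoly _ hM]
        conv_lhs => rw [hMd]
        rw [charpolyConj _ _ hU1 hU2, charpolyDiagonal]
      have hprod : ∀ f : Fin n → ℝ, (∏ i, (X - C (f i)))
          = ((Multiset.map f Finset.univ.val).map fun a => X - C a).prod := by
        intro f
        rw [Multiset.map_map]
        rfl
      have hms : Multiset.map hM.eigenvalues Finset.univ.val = Multiset.map ν Finset.univ.val := by
        have := congrArg Polynomial.roots hchar
        rwa [hprod, hprod, Polynomial.roots_multiset_prod_X_sub_C,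
          Polynomial.roots_multiset_prod_X_sub_C] at this
      obtain ⟨σ, hσ⟩ := existsPerm _ _ hms
      refine ⟨σ, fun i => ?_⟩
      rw [hσ i]
      exact (hkey i).2.1
    · -- PosDef upper bound
      have hsub : Real.tan (π / 2 - φ) • (1 : Matrix (Fin n) (Fin n) ℝ) - Mbar
          = U * Matrix.diagonal (fun i => Real.tan (π / 2 - φ) + (-1) * ν i) * Uᴴ := by
        rw [sub_eq_add_neg, show -Mbar = (-1 : ℝ) • Mbar by rw [neg_one_smul], hMd]
        exact comboDiag hU1 ν _ _
      rw [hsub]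
      apply posDefConj _ hU1 hU2
      apply Matrix.PosDef.diagonal
      intro i
      have h1 : ν i < Real.tan (π / 2 - φ) := by
        rw [hνtan i]
        apply Real.tan_lt_tan_of_lt_of_lt_pi_div_two
        · have := (hkey i).2.2
          linarith
        · linarith
        · have := Real.arctan_lt_pi_div_two (ev i)
          linarith
      linarith
    · -- PosSemidef lower bound
      have hadd : Mbar + Real.tan (θ + φ) • (1 : Matrix (Fin n) (Fin n) ℝ)
          = U * Matrix.diagonal (fun i => Real.tan (θ + φ) + 1 * ν i) * Uᴴ := by
        rw [add_comm, show Mbar = (1 : ℝ) • Mbar by rw [one_smul], hMd]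
        exact comboDiag hU1 ν _ _
      rw [hadd]
      apply Matrix.PosSemidef.mul_mul_conjTranspose_same _ U
      apply Matrix.PosSemidef.diagonal
      intro i
      have h1 : Real.tan (-(θ + φ)) ≤ ν i := by
        rw [hνtan i]
        apply Real.strictMonoOn_tan.monotoneOn
        · constructor <;> [linarith; linarith]
        · have h2 := (hkey i).2.2
          have h3 := Real.arctan_lt_pi_div_two (ev i)
          constructor <;> linarith
        · have h2 := (hkey i).2.2
          linarith
      rw [Real.tan_neg] at h1
      simp only [Pi.zero_apply, one_mul]
      linarith
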